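/- arXiv:2001.10107 — 2 statements merged into one kernel-verified Lean document; each statement's English description precedes it below -/
import Mathlib

section
/- Let A be a C*-algebra and D an abelian C*-subalgebra. If x₁, …, xₙ ∈ A all normalize D and satisfy xᵢ*xⱼ = 0 and xᵢxⱼ* = 0 whenever i ≠ j, then z = x₁ + ⋯ + xₙ is a normalizer of D, i.e., z*Dz + zDz* ⊆ D. -/
section Aux

open quasispectrum

variable {A : Type*} [NonUnitalCStarAlgebra A]

lemma cfcn_mem_closed (D : NonUnitalStarSubalgebra ℂ A) (hD : IsClosed (D : Set A))
    {a : A} (haD : a ∈ D) (ha : IsSelfAdjoint a) (f : ℝ → ℝ) (hf : Continuous f)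
    (hf0 : f 0 = 0) : cfcₙ f a ∈ D := by
  rw [cfcₙ_apply f a (hf.continuousOn) hf0 ha]
  suffices h : Set.range (cfcₙHom (R := ℝ) ha) ⊆ (D : Set A) by exact h ⟨_, rfl⟩
  intro z hz
  have h₁ := (cfcₙHom_isClosedEmbedding (R := ℝ) ha).continuous.range_subset_closure_image_dense
    (ContinuousMapZero.adjoin_id_dense (quasispectrum ℝ a)) hz
  refine hD.closure_subset_iff.mpr ?_ h₁
  rintro - ⟨g, hg, rfl⟩
  induction hg using NonUnitalStarAlgebra.adjoin_induction with
  | mem x hx =>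
      obtain rfl : x = _ := Set.mem_singleton_iff.mp hx
      have : cfcₙHom (R := ℝ) ha (ContinuousMapZero.id _) = a := cfcₙHom_id ha
      rwa [this]
  | add g₁ g₂ _ _ h₁ h₂ => simpa [map_add] using add_mem h₁ h₂
  | zero => simpa [map_zero] using zero_mem D
  | mul g₁ g₂ _ _ h₁ h₂ => simpa [map_mul] using mul_mem h₁ h₂
  | smul r g _ h =>
      rw [map_smul]
      have : (r : ℝ) • cfcₙHom ha g = ((r : ℂ)) • cfcₙHom ha g := by
        rw [← smul_one_smul ℂ r (cfcₙHom ha g)]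
        norm_num
      rw [this]
      exact SMulMemClass.smul_mem _ h
  | star g _ h => rw [map_star]; exact star_mem h

lemma key_lemma (D : NonUnitalStarSubalgebra ℂ A) (hD : IsClosed (D : Set A))
    (hcomm : ∀ x ∈ D, ∀ y ∈ D, x * y = y * x) (n : A)
    (hn : ∀ e ∈ D, star n * e * n ∈ D ∧ n * e * star n ∈ D)
    {d : A} (hd : d ∈ D) {y : A} (hy : star n * y = 0) :
    n * star n * d * y = 0 := by
  set c : A := star d * n with hc
  set b : A := star c * c with hb
  have hbsa : IsSelfAdjoint b := IsSelfAdjoint.star_mul_self c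
  have hbD : b ∈ D := by
    have h1 := (hn (d * star d) (mul_mem hd (star_mem hd))).1
    have h2 : b = star n * (d * star d) * n := by
      rw [hb, hc, star_mul, star_star]; noncomm_ring
    rwa [h2]
  have hcs : star c = star n * d := by rw [hc, star_mul, star_star]
  suffices h : ∀ ε : ℝ, 0 < ε → ‖n * star n * d * y‖ ≤ ε by
    have h0 : ‖n * star n * d * y‖ ≤ 0 := by
      refine le_of_forall_pos_le_add fun ε hε => ?_
      simpa using h ε hε
    exact norm_le_zero_iff.mp h0
  intro ε hε
  set N : ℝ := ‖n‖ * ‖y‖ + 1 with hN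
  have hN0 : 0 < N := by positivity
  set δ : ℝ := (ε / N) ^ 2 with hδ
  have hδ0 : 0 < δ := by positivity
  set f : ℝ → ℝ := fun t => min (t / δ) 1 with hf
  have hfc : Continuous f := (continuous_id.div_const δ).min continuous_const
  have hf0 : f 0 = 0 := by simp [hf]
  set e : A := cfcₙ f b with he
  have heD : e ∈ D := cfcn_mem_closed D hD hbD hbsa f hfc hf0
  have hesa : IsSelfAdjoint e := cfcₙ_predicate f b
  -- the norm of c - c * e is at most ε / N
  have hspec : ∀ t ∈ quasispectrum ℝ b, ‖t * (1 - f t) ^ 2‖ ≤ δ := by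
    intro t ht
    have ht0 : 0 ≤ t := by
      have hq : quasispectrum ℝ b = spectrum ℝ (b : Unitization ℂ A) :=
        Unitization.quasispectrum_eq_spectrum_inr' ℝ ℂ b
      have hpos : (0 : Unitization ℂ A) ≤ (b : Unitization ℂ A) := by
        rw [hb, Unitization.inr_mul, Unitization.inr_star]
        exact star_mul_self_nonneg _
      exact spectrum_nonneg_of_nonneg hpos (hq ▸ ht)
    rcases le_or_gt t δ with h | h
    · have hf1 : f t ≤ 1 := min_le_right _ _
      have hf2 : 0 ≤ f t := le_min (by positivity) zero_le_one
      have : (1 - f t) ^ 2 ≤ 1 := by nlinarith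
      rw [Real.norm_eq_abs, abs_of_nonneg (by positivity)]
      nlinarith
    · have : f t = 1 := min_eq_right ((one_le_div hδ0).mpr h.le)
      simp [this, hδ0.le]
  have hmul1 : cfcₙ (fun t => t * f t) b = b * e := by
    rw [cfcₙ_mul (fun t : ℝ => t) f b continuous_id.continuousOn rfl
      hfc.continuousOn hf0, cfcₙ_id' ℝ b hbsa]
  have hmul2 : cfcₙ (fun t => f t * t) b = e * b := by
    rw [cfcₙ_mul f (fun t : ℝ => t) b hfc.continuousOn hf0
      continuous_id.continuousOn rfl, cfcₙ_id' ℝ b hbsa]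
  have hmul3 : cfcₙ (fun t => f t * (t * f t)) b = e * (b * e) := by
    rw [cfcₙ_mul f (fun t : ℝ => t * f t) b hfc.continuousOn hf0
      (continuous_id.mul hfc).continuousOn (by simp [hf0]), hmul1]
  have hexp : star (c - c * e) * (c - c * e) = cfcₙ (fun t => t * (1 - f t) ^ 2) b := by
    have h1 : star (c - c * e) * (c - c * e)
        = b - b * e - (e * b - e * (b * e)) := by
      have hse : star e = e := hesa.star_eq
      simp only [hb, hc, star_sub, star_mul, star_star, hse]
      noncomm_ring
    have h2 : cfcₙ (fun t => t * (1 - f t) ^ 2) b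
        = cfcₙ (fun t => (t - t * f t) - (f t * t - f t * (t * f t))) b := by
      congr 1; ext t; ring
    have h3 : cfcₙ (fun t => (t - t * f t) - (f t * t - f t * (t * f t))) b
        = cfcₙ (fun t => t - t * f t) b - cfcₙ (fun t => f t * t - f t * (t * f t)) b :=
      cfcₙ_sub _ _ b (continuous_id.sub (continuous_id.mul hfc)).continuousOn
        (by simp [hf0]) ((hfc.mul continuous_id).sub
          (hfc.mul (continuous_id.mul hfc))).continuousOn (by simp [hf0])
    have h4 : cfcₙ (fun t => t - t * f t) b = b - b * e := by
      rw [cfcₙ_sub (fun t : ℝ => t) (fun t => t * f t) b continuous_id.continuousOn rfl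
        (continuous_id.mul hfc).continuousOn (by simp [hf0]), hmul1, cfcₙ_id' ℝ b hbsa]
    have h5 : cfcₙ (fun t => f t * t - f t * (t * f t)) b = e * b - e * (b * e) := by
      rw [cfcₙ_sub (fun t => f t * t) (fun t => f t * (t * f t)) b
        (hfc.mul continuous_id).continuousOn (by simp [hf0])
        (hfc.mul (continuous_id.mul hfc)).continuousOn (by simp [hf0]), hmul2, hmul3]
    rw [h1, h2, h3, h4, h5]
  have hnorm : ‖c - c * e‖ ≤ ε / N := by
    have h1 : ‖c - c * e‖ * ‖c - c * e‖ ≤ δ := by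
      rw [← CStarRing.norm_star_mul_self, hexp]
      exact norm_cfcₙ_le hspec
    have hq0 : 0 < ε / N := by positivity
    nlinarith [norm_nonneg (c - c * e)]
  have hsplit : n * star n * d * y
      = n * ((star c - e * star c) * y) + n * e * star n * d * y := by
    rw [hcs]; noncomm_ring
  have hzero2 : n * e * star n * d * y = 0 := by
    have hgD : n * e * star n ∈ D := (hn e heD).2
    have hcm := hcomm _ hgD d hd
    calc n * e * star n * d * y = d * (n * e * star n) * y := by rw [hcm]
      _ = d * (n * (e * (star n * y))) := by noncomm_ring
      _ = 0 := by rw [hy]; simp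
  have hstar : ‖star c - e * star c‖ = ‖c - c * e‖ := by
    have h' : star (c - c * e) = star c - e * star c := by
      have hse : star e = e := hesa.star_eq
      simp only [hc, star_sub, star_mul, star_star, hse]
    rw [← h', norm_star]
  have hq0 : 0 ≤ ε / N := by positivity
  calc ‖n * star n * d * y‖ = ‖n * ((star c - e * star c) * y)‖ := by
        rw [hsplit, hzero2, add_zero]
    _ ≤ ‖n‖ * ‖(star c - e * star c) * y‖ := norm_mul_le _ _
    _ ≤ ‖n‖ * (‖star c - e * star c‖ * ‖y‖) :=
        mul_le_mul_of_nonneg_left (norm_mul_le _ _) (norm_nonneg n)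
    _ = ‖n‖ * (‖c - c * e‖ * ‖y‖) := by rw [hstar]
    _ ≤ ‖n‖ * ((ε / N) * ‖y‖) := by
        refine mul_le_mul_of_nonneg_left ?_ (norm_nonneg n)
        exact mul_le_mul_of_nonneg_right hnorm (norm_nonneg y)
    _ = ‖n‖ * ‖y‖ * (ε / N) := by ring
    _ ≤ N * (ε / N) := mul_le_mul_of_nonneg_right (by rw [hN]; linarith) hq0
    _ = ε := by rw [_root_.mul_comm, div_mul_cancel₀ _ (ne_of_gt hN0)]

lemma cross_zero (D : NonUnitalStarSubalgebra ℂ A) (hD : IsClosed (D : Set A))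
    (hcomm : ∀ x ∈ D, ∀ y ∈ D, x * y = y * x) {m nn : A}
    (hnn : ∀ e ∈ D, star nn * e * nn ∈ D ∧ nn * e * star nn ∈ D)
    {d : A} (hd : d ∈ D) (hy : star nn * m = 0) :
    star m * d * nn = 0 := by
  have h0 : nn * star nn * star d * m = 0 :=
    key_lemma D hD hcomm nn hnn (star_mem hd) hy
  have h1 : (star m * d * nn) * star (star m * d * nn) = 0 := by
    calc (star m * d * nn) * star (star m * d * nn)
        = star m * d * (nn * star nn * star d * m) := by
          simp only [star_mul, star_star]; noncomm_ring
      _ = 0 := by rw [h0, mul_zero]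
  have h2 : ‖star m * d * nn‖ * ‖star m * d * nn‖ = 0 := by
    rw [← CStarRing.norm_self_mul_star, h1, norm_zero]
  exact norm_eq_zero.mp (mul_self_eq_zero.mp h2)

end Aux



/-- if `D` is an abelian C*-subalgebra and `x₁,…,xₙ` normalize `D` with
`xᵢ* xⱼ = 0 = xᵢ xⱼ*` for `i ≠ j`, then `z = ∑ xᵢ` is a normalizer of `D`. -/
theorem sum_normalizer {A : Type*} [NonUnitalCStarAlgebra A]
    (D : NonUnitalStarSubalgebra ℂ A) (hD : IsClosed (D : Set A))
    (hcomm : ∀ x ∈ D, ∀ y ∈ D, x * y = y * x)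
    (n : ℕ) (x : Fin n → A)
    (hx : ∀ i, ∀ d ∈ D, star (x i) * d * x i ∈ D ∧ x i * d * star (x i) ∈ D)
    (horth₁ : ∀ i j, i ≠ j → star (x i) * x j = 0)
    (horth₂ : ∀ i j, i ≠ j → x i * star (x j) = 0) :
    ∀ d ∈ D, star (∑ i, x i) * d * (∑ i, x i) ∈ D ∧
      (∑ i, x i) * d * star (∑ i, x i) ∈ D := by
  intro d hd
  constructor
  · have hz : star (∑ i, x i) * d * (∑ i, x i) = ∑ i, star (x i) * d * x i := by
      rw [star_sum, Finset.sum_mul, Finset.sum_mul]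
      refine Finset.sum_congr rfl fun i _ => ?_
      rw [Finset.mul_sum]
      refine Finset.sum_eq_single i (fun j _ hji => ?_)
        (fun h => absurd (Finset.mem_univ i) h)
      exact cross_zero D hD hcomm (hx j) hd (horth₁ j i hji)
    rw [hz]
    exact sum_mem fun i _ => (hx i d hd).1
  · have hz : (∑ i, x i) * d * star (∑ i, x i) = ∑ i, x i * d * star (x i) := by
      rw [star_sum, Finset.sum_mul, Finset.sum_mul]
      refine Finset.sum_congr rfl fun i _ => ?_
      rw [Finset.mul_sum]
      refine Finset.sum_eq_single i (fun j _ hji => ?_)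
        (fun h => absurd (Finset.mem_univ i) h)
      have hnn : ∀ e ∈ D, star (star (x j)) * e * star (x j) ∈ D ∧
          star (x j) * e * star (star (x j)) ∈ D := by
        intro e he
        rw [star_star]
        exact ⟨(hx j e he).2, (hx j e he).1⟩
      have hy : star (star (x j)) * star (x i) = 0 := by
        rw [star_star]; exact horth₂ j i hji
      have := cross_zero D hD hcomm hnn hd hy
      rwa [star_star] at this
    rw [hz]
    exact sum_mem fun i _ => (hx i d hd).2
end

section
/- Let (D_A ⊆ A) and (D_B ⊆ B) be nondegenerate sub-C*-algebras and let φ : A → B be a *-homomorphism with φ(N_A(D_A)) = N_B(D_B). Then φ(D_A) = D_B. -/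
open Filter Topology

section Aux

open NonUnitalStarAlgebra in
/-- The non-unital continuous functional calculus of a selfadjoint element lies in the closure
of the real non-unital star subalgebra generated by that element. -/
lemma aux_cfcn_mem_closure_adjoin {A : Type*} [NonUnitalCStarAlgebra A]
    {x : A} (hx : IsSelfAdjoint x) {f : ℝ → ℝ}
    (hf : Continuous f) (hf0 : f 0 = 0) :
    cfcₙ f x ∈ closure (adjoin ℝ {x} : Set A) := by
  have h0 : ((0 : quasispectrum ℝ x) : ℝ) = 0 := rfl
  have hdense := ContinuousMapZero.adjoin_id_dense (quasispectrum ℝ x)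
  have hg : (⟨⟨_, (hf.continuousOn (s := quasispectrum ℝ x)).restrict⟩, hf0⟩ :
      ContinuousMapZero (quasispectrum ℝ x) ℝ) ∈
      closure (adjoin ℝ {(ContinuousMapZero.id (quasispectrum ℝ x))} : Set _) := by
    rw [hdense.closure_eq]; trivial
  rw [cfcₙ_apply f x hf.continuousOn hf0 hx]
  have hmaps : Set.MapsTo (cfcₙHom hx (R := ℝ))
      (adjoin ℝ {(ContinuousMapZero.id (quasispectrum ℝ x))} : Set _) (adjoin ℝ {x} : Set A) := by
    intro g hgmem
    have h1 : cfcₙHom hx g ∈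
        NonUnitalStarSubalgebra.map (cfcₙHom hx) (adjoin ℝ {ContinuousMapZero.id (quasispectrum ℝ x)}) :=
      ⟨g, hgmem, rfl⟩
    rw [NonUnitalStarAlgHom.map_adjoin_singleton] at h1
    have hid : cfcₙHom hx (ContinuousMapZero.id (quasispectrum ℝ x)) = x := cfcₙHom_id hx
    rwa [hid] at h1
  exact map_mem_closure (cfcₙHom_continuous hx) hg hmaps

lemma aux_real_smul_mem {A : Type*} [NonUnitalCStarAlgebra A]
    (D : NonUnitalStarSubalgebra ℂ A) {x : A} (hx : x ∈ D) (r : ℝ) : r • x ∈ D := by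
  rw [show r • x = (r : ℂ) • x from (algebraMap_smul ℂ r x).symm]
  exact SMulMemClass.smul_mem _ hx

open NonUnitalStarAlgebra in
lemma aux_closure_adjoin_subset {A : Type*} [NonUnitalCStarAlgebra A]
    {D : NonUnitalStarSubalgebra ℂ A} (hD : IsClosed (D : Set A))
    {x : A} (hxD : x ∈ D) : closure (adjoin ℝ {x} : Set A) ⊆ (D : Set A) := by
  have : (adjoin ℝ {x} : Set A) ⊆ (D : Set A) := by
    intro y hy
    induction hy using NonUnitalStarAlgebra.adjoin_induction with
    | mem z hz => simpa [Set.mem_singleton_iff.mp hz] using hxD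
    | add a b _ _ ha hb => exact add_mem ha hb
    | zero => exact zero_mem D
    | mul a b _ _ ha hb => exact mul_mem ha hb
    | smul r a _ ha => exact aux_real_smul_mem D ha r
    | star a _ ha => exact star_mem ha
  calc closure (adjoin ℝ {x} : Set A) ⊆ closure (D : Set A) := closure_mono this
    _ = (D : Set A) := hD.closure_eq

/-- cfcₙ over `ℝ` of an element of a closed subalgebra stays in the subalgebra. -/
lemma aux_cfcn_mem {A : Type*} [NonUnitalCStarAlgebra A]
    {D : NonUnitalStarSubalgebra ℂ A} (hD : IsClosed (D : Set A))
    {x : A} (hxD : x ∈ D) (hx : IsSelfAdjoint x) {f : ℝ → ℝ}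
    (hf : Continuous f) (hf0 : f 0 = 0) : cfcₙ f x ∈ D :=
  aux_closure_adjoin_subset hD hxD (aux_cfcn_mem_closure_adjoin hx hf hf0)

/-- There is a positive square root inside any closed subalgebra. -/
lemma aux_sqrt_mem {A : Type*} [NonUnitalCStarAlgebra A]
    [PartialOrder A] [StarOrderedRing A]
    {D : NonUnitalStarSubalgebra ℂ A} (hD : IsClosed (D : Set A))
    {x : A} (hxD : x ∈ D) (hx : 0 ≤ x) :
    ∃ s ∈ D, 0 ≤ s ∧ s * s = x := by
  have hxsa : IsSelfAdjoint x := hx.isSelfAdjoint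
  refine ⟨cfcₙ Real.sqrt x, aux_cfcn_mem hD hxD hxsa Real.continuous_sqrt Real.sqrt_zero,
    cfcₙ_nonneg fun t _ => Real.sqrt_nonneg t, ?_⟩
  rw [← cfcₙ_mul Real.sqrt Real.sqrt x]
  have : (quasispectrum ℝ x).EqOn (fun t => Real.sqrt t * Real.sqrt t) id := fun t ht =>
    Real.mul_self_sqrt (quasispectrum_nonneg_of_nonneg x hx t ht)
  rw [cfcₙ_congr this, cfcₙ_id ℝ x]

/-- A nonneg element whose square lies in a closed subalgebra lies in the subalgebra. -/
lemma aux_pos_mem {A : Type*} [NonUnitalCStarAlgebra A]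
    [PartialOrder A] [StarOrderedRing A]
    {D : NonUnitalStarSubalgebra ℂ A} (hD : IsClosed (D : Set A))
    {b : A} (hb : 0 ≤ b) (hbb : b * b ∈ D) : b ∈ D := by
  obtain ⟨s, hsD, hs, hss⟩ := aux_sqrt_mem hD hbb (by
    simpa [hb.isSelfAdjoint.star_eq] using star_mul_self_nonneg b)
  have h1 : CFC.sqrt (b * b) = s := CFC.sqrt_unique hss hs
  have h2 : CFC.sqrt (b * b) = b := CFC.sqrt_unique rfl hb
  rw [← h2, h1]; exact hsD

/-- Star homs preserve nonnegativity in C*-algebras. -/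
lemma aux_map_nonneg {A B : Type*} [NonUnitalCStarAlgebra A] [NonUnitalCStarAlgebra B]
    [PartialOrder A] [StarOrderedRing A] [PartialOrder B] [StarOrderedRing B]
    (φ : A →⋆ₙₐ[ℂ] B) {y : A} (hy : 0 ≤ y) : 0 ≤ φ y := by
  have h1 : y = star (CFC.sqrt y) * CFC.sqrt y := by
    rw [(CFC.sqrt_nonneg (a := y)).isSelfAdjoint.star_eq, CFC.sqrt_mul_sqrt_self y hy]
  calc (0 : B) ≤ star (φ (CFC.sqrt y)) * φ (CFC.sqrt y) := star_mul_self_nonneg _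
    _ = φ y := by rw [← map_star, ← map_mul, ← h1]

/-- `star a * a` lies in `D` whenever `a` normalizes `D` and `D` is closed and contains a
left approximate unit. -/
lemma aux_star_mul_self_mem {A : Type*} [NonUnitalCStarAlgebra A]
    {D : NonUnitalStarSubalgebra ℂ A} (hD : IsClosed (D : Set A))
    {ι : Type} {l : Filter ι} {u : ι → A} (hl : l.NeBot)
    (hu : ∀ i, u i ∈ D)
    (happrox : ∀ x : A, Tendsto (fun i => ‖u i * x - x‖) l (𝓝 0))
    {a : A} (ha : ∀ d ∈ D, star a * d * a ∈ D) : star a * a ∈ D := by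
  haveI := hl
  have h1 : Tendsto (fun i => star a * u i * a) l (𝓝 (star a * a)) := by
    rw [tendsto_iff_norm_sub_tendsto_zero]
    have key : ∀ i, ‖star a * u i * a - star a * a‖ ≤ ‖star a‖ * ‖u i * a - a‖ := fun i => by
      have : star a * u i * a - star a * a = star a * (u i * a - a) := by
        rw [mul_sub, mul_assoc]
      rw [this]
      exact norm_mul_le _ _
    have h0 : Tendsto (fun i => ‖star a‖ * ‖u i * a - a‖) l (𝓝 0) := by
      simpa using (happrox a).const_mul ‖star a‖
    exact squeeze_zero (fun i => norm_nonneg _) key h0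
  exact hD.mem_of_tendsto h1 (Filter.Eventually.of_forall fun i => ha _ (hu i))

/-- Decomposition of an element of a closed star subalgebra into nonneg elements. -/
lemma aux_decomp {A : Type*} [NonUnitalCStarAlgebra A]
    [PartialOrder A] [StarOrderedRing A]
    {D : NonUnitalStarSubalgebra ℂ A} (hD : IsClosed (D : Set A))
    {d : A} (hd : d ∈ D) :
    ∃ p₁ p₂ p₃ p₄ : A, p₁ ∈ D ∧ p₂ ∈ D ∧ p₃ ∈ D ∧ p₄ ∈ D ∧
      0 ≤ p₁ ∧ 0 ≤ p₂ ∧ 0 ≤ p₃ ∧ 0 ≤ p₄ ∧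
      d = (p₁ - p₂) + Complex.I • (p₃ - p₄) := by
  open ComplexStarModule in
  have hre : (ℜ d : A) ∈ D := by
    rw [realPart_apply_coe]
    exact aux_real_smul_mem D (add_mem hd (star_mem hd)) _
  have him : (ℑ d : A) ∈ D := by
    rw [imaginaryPart_apply_coe]
    exact SMulMemClass.smul_mem _ (aux_real_smul_mem D (sub_mem hd (star_mem hd)) _)
  have hre_sa : IsSelfAdjoint (ℜ d : A) := (ℜ d).2
  have him_sa : IsSelfAdjoint (ℑ d : A) := (ℑ d).2
  refine ⟨(ℜ d : A)⁺, (ℜ d : A)⁻, (ℑ d : A)⁺, (ℑ d : A)⁻,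
    ?_, ?_, ?_, ?_, CFC.posPart_nonneg _, CFC.negPart_nonneg _,
    CFC.posPart_nonneg _, CFC.negPart_nonneg _, ?_⟩
  · rw [CFC.posPart_def]
    exact aux_cfcn_mem hD hre hre_sa (by fun_prop) (by simp)
  · rw [CFC.negPart_def]
    exact aux_cfcn_mem hD hre hre_sa (by fun_prop) (by simp)
  · rw [CFC.posPart_def]
    exact aux_cfcn_mem hD him him_sa (by fun_prop) (by simp)
  · rw [CFC.negPart_def]
    exact aux_cfcn_mem hD him him_sa (by fun_prop) (by simp)
  · rw [CFC.posPart_sub_negPart _ hre_sa, CFC.posPart_sub_negPart _ him_sa,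
      realPart_add_I_smul_imaginaryPart d]

end Aux

/-- a *-homomorphism between nondegenerate sub-C*-algebras which maps the
normalizer set onto the normalizer set maps `D_A` onto `D_B`. -/
theorem starHom_normalizer_preserving_image_eq
    {A B : Type*} [NonUnitalCStarAlgebra A] [NonUnitalCStarAlgebra B]
    [PartialOrder A] [StarOrderedRing A] [PartialOrder B] [StarOrderedRing B]
    (DA : NonUnitalStarSubalgebra ℂ A) (hDA : IsClosed (DA : Set A))
    (DB : NonUnitalStarSubalgebra ℂ B) (hDB : IsClosed (DB : Set B))
    (hunitA : ∃ (ι : Type) (l : Filter ι) (u : ι → A), l.NeBot ∧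
      (∀ i, u i ∈ DA ∧ 0 ≤ u i ∧ ‖u i‖ ≤ 1) ∧
      ∀ x : A, Tendsto (fun i => ‖u i * x - x‖) l (𝓝 0))
    (hunitB : ∃ (ι : Type) (l : Filter ι) (u : ι → B), l.NeBot ∧
      (∀ i, u i ∈ DB ∧ 0 ≤ u i ∧ ‖u i‖ ≤ 1) ∧
      ∀ x : B, Tendsto (fun i => ‖u i * x - x‖) l (𝓝 0))
    (φ : A →⋆ₙₐ[ℂ] B)
    (hφ : φ '' {a : A | ∀ d ∈ DA, star a * d * a ∈ DA ∧ a * d * star a ∈ DA}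
        = {b : B | ∀ d ∈ DB, star b * d * b ∈ DB ∧ b * d * star b ∈ DB}) :
    φ '' (DA : Set A) = (DB : Set B) := by
  obtain ⟨ιA, lA, uA, hlA, huA, happroxA⟩ := hunitA
  obtain ⟨ιB, lB, uB, hlB, huB, happroxB⟩ := hunitB
  -- DA is contained in its own normalizer set
  have hDA_norm : ∀ d ∈ DA, d ∈ {a : A | ∀ d' ∈ DA, star a * d' * a ∈ DA ∧ a * d' * star a ∈ DA} :=
    fun d hd d' hd' => ⟨mul_mem (mul_mem (star_mem hd) hd') hd,
      mul_mem (mul_mem hd hd') (star_mem hd)⟩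
  have hDB_norm : ∀ b ∈ DB, b ∈ {b : B | ∀ d' ∈ DB, star b * d' * b ∈ DB ∧ b * d' * star b ∈ DB} :=
    fun b hb d' hd' => ⟨mul_mem (mul_mem (star_mem hb) hd') hb,
      mul_mem (mul_mem hb hd') (star_mem hb)⟩
  -- key step forward: nonneg elements of DA map into DB
  have fwd_pos : ∀ p : A, p ∈ DA → 0 ≤ p → φ p ∈ DB := by
    intro p hpD hp
    have hpN : φ p ∈ {b : B | ∀ d ∈ DB, star b * d * b ∈ DB ∧ b * d * star b ∈ DB} := by
      rw [← hφ]
      exact ⟨p, hDA_norm p hpD, rfl⟩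
    have hb : 0 ≤ φ p := aux_map_nonneg φ hp
    have hbb : φ p * φ p ∈ DB := by
      have h := aux_star_mul_self_mem hDB hlB (fun i => (huB i).1) happroxB
        (fun d hd => (hpN d hd).1)
      rwa [hb.isSelfAdjoint.star_eq] at h
    exact aux_pos_mem hDB hb hbb
  -- key step backward: nonneg elements of DB are in the image of DA
  have bwd_pos : ∀ q : B, q ∈ DB → 0 ≤ q → q ∈ φ '' (DA : Set A) := by
    intro q hqD hq
    have hqN : q ∈ φ '' {a : A | ∀ d ∈ DA, star a * d * a ∈ DA ∧ a * d * star a ∈ DA} := by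
      rw [hφ]
      exact hDB_norm q hqD
    obtain ⟨a, haN, rfl⟩ := hqN
    have hx : star a * a ∈ DA :=
      aux_star_mul_self_mem hDA hlA (fun i => (huA i).1) happroxA (fun d hd => (haN d hd).1)
    obtain ⟨s, hsD, hs, hss⟩ := aux_sqrt_mem hDA hx (star_mul_self_nonneg a)
    have hφs : 0 ≤ φ s := aux_map_nonneg φ hs
    have hsq : φ s * φ s = φ a * φ a := by
      rw [← map_mul, hss, map_mul, map_star,
        hq.isSelfAdjoint.star_eq]
    have h1 : CFC.sqrt (φ a * φ a) = φ s := CFC.sqrt_unique hsq hφs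
    have h2 : CFC.sqrt (φ a * φ a) = φ a := CFC.sqrt_unique rfl hq
    exact ⟨s, hsD, by rw [← h1, h2]⟩
  apply Set.Subset.antisymm
  · rintro _ ⟨d, hd, rfl⟩
    obtain ⟨p₁, p₂, p₃, p₄, h₁, h₂, h₃, h₄, hp₁, hp₂, hp₃, hp₄, hdecomp⟩ := aux_decomp hDA hd
    rw [hdecomp]
    simp only [map_add, map_sub, map_smul]
    exact add_mem (sub_mem (fwd_pos _ h₁ hp₁) (fwd_pos _ h₂ hp₂))
      (SMulMemClass.smul_mem _ (sub_mem (fwd_pos _ h₃ hp₃) (fwd_pos _ h₄ hp₄)))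
  · intro b hb
    obtain ⟨q₁, q₂, q₃, q₄, h₁, h₂, h₃, h₄, hq₁, hq₂, hq₃, hq₄, hdecomp⟩ := aux_decomp hDB hb
    rw [show φ '' (DA : Set A) = (NonUnitalStarSubalgebra.map φ DA : Set B) from
      (NonUnitalStarSubalgebra.coe_map DA φ).symm] at *
    rw [hdecomp]
    exact add_mem (sub_mem (bwd_pos _ h₁ hq₁) (bwd_pos _ h₂ hq₂))
      (SMulMemClass.smul_mem _ (sub_mem (bwd_pos _ h₃ hq₃) (bwd_pos _ h₄ hq₄)))
end
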